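/- In the setting where time is a causeless feature of an experiment with intervention E whose not-manipulated distribution is the holistic distribution of (P_T, D_t): the distribution process D_t has drift (i.e., D_t is not P_T-a.s. constant) if and only if the time-manipulation kernel t ↦ E_{𝔱}(t, ·) is not P_T-a.s. constant. -/
import Mathlib


open MeasureTheory ProbabilityTheory

/-- In the setting of Theorem 1 of the paper (time causeless, `E∅` the
holistic distribution), the process `D` has drift (i.e. `P_T² {(s,t) : D s ≠ D t} > 0`)
iff the time-manipulation kernel `Et` is not `P_T`-a.s. constant. -/
theorem stmt_5 {𝒳 𝒯 : Type*} [MeasurableSpace 𝒳] [StandardBorelSpace 𝒳]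
    [MeasurableSpace 𝒯]
    (P_T : Measure 𝒯) [IsProbabilityMeasure P_T]
    (D : Kernel 𝒯 𝒳) [IsMarkovKernel D]
    (Et : Kernel 𝒯 𝒳) [IsMarkovKernel Et]
    (E0 : Measure (𝒳 × 𝒯))
    (hhol : ∀ (A : Set 𝒳) (W : Set 𝒯), MeasurableSet A → MeasurableSet W →
      E0 (A ×ˢ W) = ∫⁻ t in W, D t A ∂P_T)
    (hcauseless : ∀ (A : Set 𝒳) (W : Set 𝒯), MeasurableSet A → MeasurableSet W →
      E0 (A ×ˢ W) = ∫⁻ t in W, Et t A ∂P_T) :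
    0 < (P_T.prod P_T) {p : 𝒯 × 𝒯 | D p.1 ≠ D p.2} ↔
    0 < (P_T.prod P_T) {p : 𝒯 × 𝒯 | Et p.1 ≠ Et p.2} := by
  -- Step 1: the two composed measures agree (both disintegrate E0, swapped).
  have hcomp : P_T ⊗ₘ D = P_T ⊗ₘ Et := by
    refine ext_of_generate_finite _ generateFrom_prod.symm isPiSystem_prod ?_ ?_
    · rintro _ ⟨W, hW, A, hA, rfl⟩
      rw [Measure.compProd_apply_prod hW hA, Measure.compProd_apply_prod hW hA,
        ← hhol A W hA hW, ← hcauseless A W hA hW]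
    · simp
  -- Step 2: a.e. uniqueness of disintegration gives D = Et a.e.
  have hT : Nonempty 𝒯 := by
    by_contra h
    rw [not_nonempty_iff] at h
    have := measure_univ (μ := P_T)
    rw [Set.univ_eq_empty_iff.mpr (by infer_instance), measure_empty] at this
    exact zero_ne_one this
  have hX : Nonempty 𝒳 := by
    obtain ⟨t⟩ := hT
    by_contra h
    rw [not_nonempty_iff] at h
    have := measure_univ (μ := D t)
    rw [Set.univ_eq_empty_iff.mpr (by infer_instance), measure_empty] at this
    exact zero_ne_one this
  have hae : ∀ᵐ t ∂P_T, D t = Et t := by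
    have h1 := eq_condKernel_of_measure_eq_compProd (ρ := P_T ⊗ₘ D) D
      (by rw [Measure.fst_compProd])
    have h2 := eq_condKernel_of_measure_eq_compProd (ρ := P_T ⊗ₘ D) Et
      (by rw [Measure.fst_compProd, hcomp])
    rw [Measure.fst_compProd] at h1 h2
    filter_upwards [h1, h2] with t ht1 ht2
    rw [ht1, ht2]
  -- Step 3: transfer the drift sets up to null sets.
  set N := toMeasurable P_T {t | D t ≠ Et t} with hN
  have hNmeas : MeasurableSet N := measurableSet_toMeasurable _ _
  have hN0 : P_T N = 0 := by
    rw [measure_toMeasurable]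
    exact hae
  have hbad1 : (P_T.prod P_T) (N ×ˢ Set.univ) = 0 := by
    rw [Measure.prod_prod, hN0, zero_mul]
  have hbad2 : (P_T.prod P_T) (Set.univ ×ˢ N) = 0 := by
    rw [Measure.prod_prod, hN0, mul_zero]
  have key : ∀ (K L : Kernel 𝒯 𝒳), (∀ t ∉ {t | D t ≠ Et t}, K t = L t) →
      (P_T.prod P_T) {p : 𝒯 × 𝒯 | K p.1 ≠ K p.2} ≤
      (P_T.prod P_T) {p : 𝒯 × 𝒯 | L p.1 ≠ L p.2} := by
    intro K L hKL
    have hsub : {p : 𝒯 × 𝒯 | K p.1 ≠ K p.2} ⊆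
        {p : 𝒯 × 𝒯 | L p.1 ≠ L p.2} ∪ (N ×ˢ Set.univ ∪ Set.univ ×ˢ N) := by
      intro p hp
      by_cases h1 : p.1 ∈ {t | D t ≠ Et t}
      · exact Or.inr (Or.inl ⟨subset_toMeasurable _ _ h1, Set.mem_univ _⟩)
      by_cases h2 : p.2 ∈ {t | D t ≠ Et t}
      · exact Or.inr (Or.inr ⟨Set.mem_univ _, subset_toMeasurable _ _ h2⟩)
      · refine Or.inl ?_
        intro hL
        exact hp (by rw [hKL p.1 h1, hKL p.2 h2, hL])
    calc (P_T.prod P_T) {p : 𝒯 × 𝒯 | K p.1 ≠ K p.2}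
        ≤ (P_T.prod P_T) ({p : 𝒯 × 𝒯 | L p.1 ≠ L p.2} ∪ (N ×ˢ Set.univ ∪ Set.univ ×ˢ N)) :=
          measure_mono hsub
      _ ≤ (P_T.prod P_T) {p : 𝒯 × 𝒯 | L p.1 ≠ L p.2} +
          (P_T.prod P_T) (N ×ˢ Set.univ ∪ Set.univ ×ˢ N) := measure_union_le _ _
      _ = (P_T.prod P_T) {p : 𝒯 × 𝒯 | L p.1 ≠ L p.2} := by
          rw [measure_union_null hbad1 hbad2, add_zero]
  have heq : (P_T.prod P_T) {p : 𝒯 × 𝒯 | D p.1 ≠ D p.2} =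
      (P_T.prod P_T) {p : 𝒯 × 𝒯 | Et p.1 ≠ Et p.2} := by
    refine le_antisymm (key D Et ?_) (key Et D ?_)
    · intro t ht
      exact not_not.mp ht
    · intro t ht
      exact (not_not.mp ht).symm
  rw [heq]
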